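/- With notation as in the setup for isotropic degeneracy loci (partition λ defined from p and q), the combinatorial quantity γ_i = #{j : 1 ≤ j < i, λ_i + λ_j > 2(p-1) + i - j} equals ρ_i = #{j : 1 ≤ j < i, q_j ≥ 1 - q_i}. In particular γ_i = i - 1 whenever q_i > 0. -/

import Mathlib

private lemma qchain (s : ℕ) (q : ℕ → ℤ)
    (hdec : ∀ i, 1 ≤ i → i < s → q (i + 1) < q i) :
    ∀ j j' : ℕ, 1 ≤ j → j ≤ j' → j' ≤ s → q j' + ((j' : ℤ) - (j : ℤ)) ≤ q j := by
  intro j j' hj hle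
  induction j', hle using Nat.le_induction with
  | base => intro _; simp
  | succ n hn ih =>
    intro hns
    have h1 := hdec n (hj.trans hn) (by omega)
    have h2 := ih (by omega)
    push_cast at h2 ⊢
    linarith

private lemma rho_iff (s : ℕ) (q : ℕ → ℤ)
    (hdec : ∀ i, 1 ≤ i → i < s → q (i + 1) < q i)
    (i j : ℕ) (hj : 1 ≤ j) (hji : j < i) (his : i ≤ s) :
    (1 - q i ≤ q j ↔ j ≤ ((Finset.Icc 1 (i - 1)).filter fun k => 1 - q i ≤ q k).card) := by
  constructor
  · intro h
    have hsub : Finset.Icc 1 j ⊆ (Finset.Icc 1 (i - 1)).filter fun k => 1 - q i ≤ q k := by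
      intro k hk
      simp only [Finset.mem_Icc] at hk
      simp only [Finset.mem_filter, Finset.mem_Icc]
      refine ⟨⟨hk.1, by omega⟩, ?_⟩
      have h1 := qchain s q hdec k j hk.1 hk.2 (by omega)
      have h2 : (0:ℤ) ≤ (j:ℤ) - (k:ℤ) := by
        have := hk.2; omega
      linarith
    have h3 := Finset.card_le_card hsub
    rw [Nat.card_Icc] at h3
    omega
  · intro h
    by_contra hc
    push_neg at hc
    have hsub : ((Finset.Icc 1 (i - 1)).filter fun k => 1 - q i ≤ q k) ⊆ Finset.Icc 1 (j - 1) := by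
      intro k hk
      simp only [Finset.mem_filter, Finset.mem_Icc] at hk
      simp only [Finset.mem_Icc]
      refine ⟨hk.1.1, ?_⟩
      by_contra hkj
      push_neg at hkj
      have hjk : j ≤ k := by omega
      have h1 := qchain s q hdec j k hj hjk (by omega)
      have h2 : (0:ℤ) ≤ (k:ℤ) - (j:ℤ) := by omega
      linarith [hk.2]
    have h3 := Finset.card_le_card hsub
    rw [Nat.card_Icc] at h3
    omega

private lemma rho_card_le (s : ℕ) (q : ℕ → ℤ) (i : ℕ) :
    ((Finset.Icc 1 (i - 1)).filter fun k => 1 - q i ≤ q k).card ≤ i - 1 := by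
  have h := Finset.card_filter_le (Finset.Icc 1 (i - 1)) (fun k => 1 - q i ≤ q k)
  rw [Nat.card_Icc] at h
  omega

private lemma rho_le_a (a s : ℕ) (q : ℕ → ℤ)
    (hdec : ∀ i, 1 ≤ i → i < s → q (i + 1) < q i)
    (hneg : ∀ i, a < i → i ≤ s → q i < 0)
    (i : ℕ) (hai : a < i) (his : i ≤ s) :
    ((Finset.Icc 1 (i - 1)).filter fun k => 1 - q i ≤ q k).card ≤ a := by
  have hrle := rho_card_le s q i
  by_contra hc
  push_neg at hc
  have h1 : 1 - q i ≤ q (a + 1) :=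
    (rho_iff s q hdec i (a + 1) (by omega) (by omega) his).2 (by omega)
  have h2 := hneg (a + 1) (by omega) (by omega)
  have h3 := hneg i hai his
  linarith

private lemma lemA (a s : ℕ) (q : ℕ → ℤ)
    (hdec : ∀ i, 1 ≤ i → i < s → q (i + 1) < q i)
    (hpos : ∀ i, 1 ≤ i → i ≤ a → 0 < q i)
    (hneg : ∀ i, a < i → i ≤ s → q i < 0)
    (hdist : ∀ i j, 1 ≤ i → i ≤ a → a < j → j ≤ s → q i ≠ -q j)
    (i : ℕ) (hai : a < i) (his : i ≤ s) :
    (i : ℤ) - (((Finset.Icc 1 (i - 1)).filter fun k => 1 - q i ≤ q k).card : ℤ) ≤ -q i := by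
  have hrle := rho_card_le s q i
  have hqi := hneg i hai his
  have key : (Finset.Icc (((Finset.Icc 1 (i - 1)).filter fun k => 1 - q i ≤ q k).card + 1) i).card
      ≤ (Finset.Icc (1 : ℤ) (-q i)).card := by
    apply Finset.card_le_card_of_injOn (fun j => if j ≤ a then q j else -q j)
    · intro j hj
      simp only [Finset.coe_Icc, Set.mem_Icc] at hj
      simp only [Finset.coe_Icc, Set.mem_Icc]
      by_cases hja : j ≤ a
      · rw [if_pos hja]
        have h1 : 0 < q j := hpos j (by omega) hja
        have hji : j < i := by omega
        have h2 : ¬ (1 - q i ≤ q j) := by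
          rw [rho_iff s q hdec i j (by omega) hji his]
          omega
        push_neg at h2
        constructor <;> linarith
      · rw [if_neg hja]
        push_neg at hja
        have h1 := hneg j hja (by omega)
        have h2 := qchain s q hdec j i (by omega) hj.2 his
        have h3 : (0:ℤ) ≤ (i:ℤ) - (j:ℤ) := by
          have := hj.2; omega
        constructor <;> linarith
    · intro j hj k hk hf
      simp only [Finset.coe_Icc, Set.mem_Icc] at hj hk
      have hmono : ∀ m n : ℕ, 1 ≤ m → m < n → n ≤ s → q n < q m := by
        intro m n hm hmn hns
        have h1 := qchain s q hdec m n hm (by omega) hns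
        have h2 : (1:ℤ) ≤ (n:ℤ) - (m:ℤ) := by omega
        linarith
      by_cases hja : j ≤ a <;> by_cases hka : k ≤ a
      · simp only [if_pos hja, if_pos hka] at hf
        by_contra hne
        rcases Nat.lt_or_ge j k with h | h
        · have := hmono j k (by omega) h (by omega); linarith
        · have := hmono k j (by omega) (by omega) (by omega); linarith
      · simp only [if_pos hja, if_neg hka] at hf
        exact absurd hf (hdist j k (by omega) hja (by omega) (by omega))
      · simp only [if_neg hja, if_pos hka] at hf
        exact absurd hf.symm (hdist k j (by omega) hka (by omega) (by omega))
      · simp only [if_neg hja, if_neg hka] at hf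
        have hf' : q j = q k := by linarith
        by_contra hne
        rcases Nat.lt_or_ge j k with h | h
        · have := hmono j k (by omega) h (by omega); linarith
        · have := hmono k j (by omega) (by omega) (by omega); linarith
  rw [Nat.card_Icc, Int.card_Icc] at key
  omega

theorem stmt4 (p a s : ℕ) (q : ℕ → ℤ)
    (hp1 : 1 ≤ p) (ha1 : 1 ≤ a) (has : a ≤ s)
    (hdec : ∀ i, 1 ≤ i → i < s → q (i + 1) < q i)
    (hpos : ∀ i, 1 ≤ i → i ≤ a → 0 < q i)
    (hneg : ∀ i, a < i → i ≤ s → q i < 0)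
    (hdist : ∀ i j, 1 ≤ i → i ≤ a → a < j → j ≤ s → q i ≠ -q j) :
    let ρ : ℕ → ℕ := fun i => ((Finset.Icc 1 (i - 1)).filter fun j => 1 - q i ≤ q j).card
    let lam : ℕ → ℤ := fun i =>
      if i ≤ a then q i + (p : ℤ) - 1 else q i + (p : ℤ) - 1 + (i : ℤ) - (ρ i : ℤ)
    let γ : ℕ → ℕ := fun i =>
      ((Finset.Icc 1 (i - 1)).filter fun (j : ℕ) =>
        2 * ((p : ℤ) - 1) + (i : ℤ) - (j : ℤ) < lam i + lam j).card
    (∀ i, 1 ≤ i → i ≤ s → γ i = ρ i) ∧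
    (∀ i, 1 ≤ i → i ≤ s → 0 < q i → (γ i : ℤ) = (i : ℤ) - 1) := by
  intro ρ lam γ
  have hρdef : ∀ i : ℕ, ρ i = ((Finset.Icc 1 (i - 1)).filter fun k => 1 - q i ≤ q k).card :=
    fun _ => rfl
  have hmain : ∀ i, 1 ≤ i → i ≤ s → γ i = ρ i := by
    intro i h1 his
    have hcong : ∀ j ∈ Finset.Icc 1 (i - 1),
        ((2 * ((p : ℤ) - 1) + (i : ℤ) - (j : ℤ) < lam i + lam j) ↔ (1 - q i ≤ q j)) := by
      intro j hj
      simp only [Finset.mem_Icc] at hj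
      obtain ⟨hj1, hj2⟩ := hj
      have hji : j < i := by omega
      have hij1 : (1:ℤ) ≤ (i:ℤ) - (j:ℤ) := by omega
      by_cases hia : i ≤ a
      · have hja : j ≤ a := by omega
        simp only [lam, if_pos hia, if_pos hja]
        have hch := qchain s q hdec j i hj1 (by omega) his
        have hqi := hpos i h1 hia
        have hqj := hpos j hj1 hja
        constructor <;> intro _ <;> linarith
      · push_neg at hia
        have hρa : ρ i ≤ a := by rw [hρdef i]; exact rho_le_a a s q hdec hneg i hia his
        have hρle : ρ i ≤ i - 1 := by rw [hρdef i]; exact rho_card_le s q i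
        by_cases hjρ : j ≤ ρ i
        · have hja : j ≤ a := hjρ.trans hρa
          simp only [lam, if_neg (by omega : ¬ i ≤ a), if_pos hja]
          have h1ρ : 1 ≤ ρ i := hj1.trans hjρ
          have hcρ : 1 - q i ≤ q (ρ i) := by
            have := (rho_iff s q hdec i (ρ i) h1ρ (by omega) his).2
            rw [← hρdef i] at this
            exact this le_rfl
          have hch := qchain s q hdec j (ρ i) hj1 hjρ (by omega)
          have hρside : 1 - q i ≤ q j := by
            have := (rho_iff s q hdec i j hj1 hji his).2
            rw [← hρdef i] at this
            exact this hjρ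
          have hρj : (0:ℤ) ≤ ((ρ i : ℕ) : ℤ) - (j:ℤ) := by omega
          constructor <;> intro _
          · exact hρside
          · push_cast at hch ⊢
            linarith
        · push_neg at hjρ
          have hρside : ¬ (1 - q i ≤ q j) := by
            rw [rho_iff s q hdec i j hj1 hji his, ← hρdef i]
            omega
          apply iff_of_false _ hρside
          by_cases hja : j ≤ a
          · simp only [lam, if_neg (by omega : ¬ i ≤ a), if_pos hja]
            have h1' : ¬ (1 - q i ≤ q (ρ i + 1)) := by
              rw [rho_iff s q hdec i (ρ i + 1) (by omega) (by omega) his, ← hρdef i]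
              omega
            push_neg at h1'
            have h2 : q (ρ i + 1) ≠ -q i :=
              hdist (ρ i + 1) i (by omega) (by omega) hia his
            have h3 := qchain s q hdec (ρ i + 1) j (by omega) (by omega) (by omega)
            have h4 : q (ρ i + 1) ≤ -q i - 1 := by omega
            push_cast at h3
            intro hγ
            linarith
          · push_neg at hja
            simp only [lam, if_neg (by omega : ¬ i ≤ a), if_neg (by omega : ¬ j ≤ a)]
            have hA1 := lemA a s q hdec hpos hneg hdist i hia his
            have hA2 := lemA a s q hdec hpos hneg hdist j hja (by omega)
            rw [← hρdef i] at hA1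
            rw [← hρdef j] at hA2
            intro hγ
            linarith
    have heq : (Finset.Icc 1 (i - 1)).filter (fun (j : ℕ) =>
        2 * ((p : ℤ) - 1) + (i : ℤ) - (j : ℤ) < lam i + lam j)
        = (Finset.Icc 1 (i - 1)).filter (fun j => 1 - q i ≤ q j) :=
      Finset.filter_congr hcong
    exact congrArg Finset.card heq
  refine ⟨hmain, ?_⟩
  intro i h1 his hqi
  have hia : i ≤ a := by
    by_contra hc
    push_neg at hc
    exact absurd hqi (not_lt.2 (hneg i hc his).le)
  have hρ : ρ i = i - 1 := by
    have heq : (Finset.Icc 1 (i - 1)).filter (fun j => 1 - q i ≤ q j) = Finset.Icc 1 (i - 1) := by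
      apply Finset.filter_true_of_mem
      intro j hj
      simp only [Finset.mem_Icc] at hj
      have := hpos j hj.1 (by omega)
      linarith
    rw [hρdef i, heq, Nat.card_Icc]
    omega
  have := hmain i h1 his
  omega
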